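/- Specializing the weak Rényi triangle inequality to λ = 1/2: for q > 1 and probability measures μ, ν, π, one has R_q(μ ‖ π) ≤ ((q - 1/2)/(q - 1)) R_{2q}(μ ‖ ν) + R_{2q-1}(ν ‖ π). -/

import Mathlib

open MeasureTheory
open scoped Classical

/-- The `q`-Rényi divergence `R_q(μ ‖ ν) = (q-1)⁻¹ log ∫ (dμ/dν)^q dν`, with the
convention that it is `+∞` when `μ` is not absolutely continuous w.r.t. `ν`. -/
noncomputable def renyiDiv {Ω : Type*} [MeasurableSpace Ω] (q : ℝ) (μ ν : Measure Ω) : EReal :=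
  if μ ≪ ν then (((q - 1)⁻¹ : ℝ) : EReal) * ENNReal.log (∫⁻ x, μ.rnDeriv ν x ^ q ∂ν)
  else ⊤

section aux

open scoped ENNReal

variable {Ω : Type*} [MeasurableSpace Ω]

/-- For probability measures with `α ≪ β` and `p > 1`, `∫ (dα/dβ)^p dβ ≥ 1`. -/
lemma one_le_lintegral_rnDeriv_rpow (α β : Measure Ω) [IsProbabilityMeasure α]
    [IsProbabilityMeasure β] (hαβ : α ≪ β) {p : ℝ} (hp : 1 < p) :
    1 ≤ ∫⁻ x, α.rnDeriv β x ^ p ∂β := by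
  have hconj : p.HolderConjugate (p / (p - 1)) := Real.HolderConjugate.conjExponent hp
  have h := ENNReal.lintegral_mul_le_Lp_mul_Lq β hconj
    (Measure.measurable_rnDeriv α β).aemeasurable
    (aemeasurable_const (b := (1 : ℝ≥0∞)))
  simp only [Pi.mul_apply, mul_one, ENNReal.one_rpow, lintegral_const, measure_univ,
    ENNReal.one_rpow] at h
  rw [Measure.lintegral_rnDeriv hαβ, measure_univ] at h
  have h' : 1 ≤ (∫⁻ x, α.rnDeriv β x ^ p ∂β) ^ (1 / p) := by
    simpa using h
  have hp0 : 0 < 1 / p := by positivity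
  by_contra hlt
  push_neg at hlt
  have := ENNReal.rpow_lt_rpow hlt hp0
  rw [ENNReal.one_rpow] at this
  exact absurd h' (not_le.mpr this)

lemma renyiDiv_nonneg (p : ℝ) (hp : 1 < p) (α β : Measure Ω) [IsProbabilityMeasure α]
    [IsProbabilityMeasure β] : 0 ≤ renyiDiv p α β := by
  rw [renyiDiv]
  split_ifs with h
  · refine mul_nonneg ?_ ?_
    · exact_mod_cast inv_nonneg.mpr (by linarith : (0:ℝ) ≤ p - 1)
    · rw [ENNReal.zero_le_log_iff]
      exact one_le_lintegral_rnDeriv_rpow α β h hp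
  · exact le_top

end aux

/-- Weak triangle inequality for Rényi divergences specialized to `λ = 1/2`:
`R_q(μ ‖ π) ≤ ((q - 1/2)/(q - 1)) R_{2q}(μ ‖ ν) + R_{2q-1}(ν ‖ π)`. -/
theorem renyi_weak_triangle_half {Ω : Type*} [MeasurableSpace Ω]
    (μ ν π : Measure Ω)
    [IsProbabilityMeasure μ] [IsProbabilityMeasure ν] [IsProbabilityMeasure π]
    (q : ℝ) (hq : 1 < q) :
    renyiDiv q μ π ≤
      (((q - 1 / 2) / (q - 1) : ℝ) : EReal) * renyiDiv (2 * q) μ ν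
        + renyiDiv (2 * q - 1) ν π := by
  have hq2 : (1:ℝ) < 2 * q := by linarith
  have hq21 : (1:ℝ) < 2 * q - 1 := by linarith
  have hcoef_pos : (0:ℝ) < (q - 1 / 2) / (q - 1) := by
    apply div_pos <;> linarith
  -- nonnegativity of the two RHS Rényi divergences
  have hR1 : 0 ≤ renyiDiv (2 * q) μ ν := renyiDiv_nonneg _ hq2 μ ν
  have hR2 : 0 ≤ renyiDiv (2 * q - 1) ν π := renyiDiv_nonneg _ hq21 ν π
  have hterm1_nonneg : 0 ≤ (((q - 1 / 2) / (q - 1) : ℝ) : EReal) * renyiDiv (2 * q) μ ν :=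
    mul_nonneg (by exact_mod_cast hcoef_pos.le) hR1
  by_cases hνπ : ν ≪ π
  swap
  · have h2 : renyiDiv (2 * q - 1) ν π = ⊤ := by rw [renyiDiv, if_neg hνπ]
    rw [h2, EReal.add_top_of_ne_bot (ne_of_gt (lt_of_lt_of_le EReal.bot_lt_zero
      hterm1_nonneg))]
    exact le_top
  by_cases hμν : μ ≪ ν
  swap
  · have h1 : renyiDiv (2 * q) μ ν = ⊤ := by rw [renyiDiv, if_neg hμν]
    rw [h1, EReal.coe_mul_top_of_pos (by exact_mod_cast hcoef_pos),
      EReal.top_add_of_ne_bot (ne_of_gt (lt_of_lt_of_le EReal.bot_lt_zero hR2))]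
    exact le_top
  have hμπ : μ ≪ π := hμν.trans hνπ
  set A := ∫⁻ x, μ.rnDeriv π x ^ q ∂π with hA
  set B := ∫⁻ x, μ.rnDeriv ν x ^ (2 * q) ∂ν with hB
  set C := ∫⁻ x, ν.rnDeriv π x ^ (2 * q - 1) ∂π with hC
  -- Cauchy-Schwarz: A ≤ B^(1/2) * C^(1/2)
  have key : A ≤ B ^ ((1:ℝ)/2) * C ^ ((1:ℝ)/2) := by
    have hmf : Measurable (fun x => μ.rnDeriv ν x ^ q * ν.rnDeriv π x ^ ((1:ℝ)/2)) :=
      ((Measure.measurable_rnDeriv μ ν).pow_const _).mul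
        ((Measure.measurable_rnDeriv ν π).pow_const _)
    have hmg : Measurable (fun x => ν.rnDeriv π x ^ (q - 1/2)) :=
      (Measure.measurable_rnDeriv ν π).pow_const _
    have hae : ∀ᵐ x ∂π, μ.rnDeriv π x ^ q =
        (μ.rnDeriv ν x ^ q * ν.rnDeriv π x ^ ((1:ℝ)/2)) * ν.rnDeriv π x ^ (q - 1/2) := by
      filter_upwards [Measure.rnDeriv_mul_rnDeriv hμν] with x hx
      rw [← hx]
      simp only [Pi.mul_apply]
      rw [ENNReal.mul_rpow_of_nonneg _ _ (by linarith : (0:ℝ) ≤ q), mul_assoc,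
        ← ENNReal.rpow_add_of_nonneg _ _ (by norm_num) (by linarith : (0:ℝ) ≤ q - 1/2)]
      norm_num
    have hconj : (2:ℝ).HolderConjugate 2 := Real.HolderConjugate.two_two
    have holder := ENNReal.lintegral_mul_le_Lp_mul_Lq π hconj hmf.aemeasurable hmg.aemeasurable
    have hAeq : A = ∫⁻ x, ((fun x => μ.rnDeriv ν x ^ q * ν.rnDeriv π x ^ ((1:ℝ)/2)) *
        (fun x => ν.rnDeriv π x ^ (q - 1/2))) x ∂π := by
      exact lintegral_congr_ae hae
    have hf2 : ∫⁻ x, (μ.rnDeriv ν x ^ q * ν.rnDeriv π x ^ ((1:ℝ)/2)) ^ (2:ℝ) ∂π = B := by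
      have heq : ∀ x, (μ.rnDeriv ν x ^ q * ν.rnDeriv π x ^ ((1:ℝ)/2)) ^ (2:ℝ)
          = ν.rnDeriv π x * μ.rnDeriv ν x ^ (2 * q) := by
        intro x
        rw [ENNReal.mul_rpow_of_nonneg _ _ (by norm_num : (0:ℝ) ≤ 2),
          ← ENNReal.rpow_mul, ← ENNReal.rpow_mul,
          show q * 2 = 2 * q by ring, show (1:ℝ)/2 * 2 = 1 by norm_num,
          ENNReal.rpow_one, mul_comm]
      simp_rw [heq]
      rw [lintegral_rnDeriv_mul hνπ
        ((Measure.measurable_rnDeriv μ ν).pow_const _).aemeasurable]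
    have hg2 : ∫⁻ x, (ν.rnDeriv π x ^ (q - 1/2)) ^ (2:ℝ) ∂π = C := by
      have heq : ∀ x, (ν.rnDeriv π x ^ (q - 1/2)) ^ (2:ℝ) = ν.rnDeriv π x ^ (2 * q - 1) := by
        intro x
        rw [← ENNReal.rpow_mul]
        congr 1
        ring
      simp_rw [heq]
      rfl
    rw [hf2, hg2] at holder
    calc A = _ := hAeq
    _ ≤ B ^ ((1:ℝ)/2) * C ^ ((1:ℝ)/2) := holder
  -- bounds 1 ≤ A, B, C
  have hA1 : 1 ≤ A := one_le_lintegral_rnDeriv_rpow μ π hμπ hq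
  have hB1 : 1 ≤ B := one_le_lintegral_rnDeriv_rpow μ ν hμν hq2
  have hC1 : 1 ≤ C := one_le_lintegral_rnDeriv_rpow ν π hνπ hq21
  have e1 : renyiDiv q μ π = (((q - 1)⁻¹ : ℝ) : EReal) * ENNReal.log A := by
    rw [renyiDiv, if_pos hμπ]
  have e2 : renyiDiv (2 * q) μ ν = (((2 * q - 1)⁻¹ : ℝ) : EReal) * ENNReal.log B := by
    rw [renyiDiv, if_pos hμν]
  have e3 : renyiDiv (2 * q - 1) ν π = (((2 * q - 1 - 1)⁻¹ : ℝ) : EReal) * ENNReal.log C := by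
    rw [renyiDiv, if_pos hνπ]
  rw [e1, e2, e3]
  by_cases hBtop : B = ⊤
  · rw [hBtop, ENNReal.log_top, EReal.coe_mul_top_of_pos
      (by exact_mod_cast inv_pos.mpr (by linarith : (0:ℝ) < 2 * q - 1)),
      EReal.coe_mul_top_of_pos (by exact_mod_cast hcoef_pos),
      EReal.top_add_of_ne_bot]
    · exact le_top
    · refine ne_of_gt (lt_of_lt_of_le EReal.bot_lt_zero (mul_nonneg ?_ ?_))
      · exact_mod_cast inv_nonneg.mpr (by linarith : (0:ℝ) ≤ 2 * q - 1 - 1)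
      · rw [ENNReal.zero_le_log_iff]; exact hC1
  by_cases hCtop : C = ⊤
  · rw [hCtop, ENNReal.log_top, EReal.coe_mul_top_of_pos
      (by exact_mod_cast inv_pos.mpr (by linarith : (0:ℝ) < 2 * q - 1 - 1)),
      EReal.add_top_of_ne_bot]
    · exact le_top
    · refine ne_of_gt (lt_of_lt_of_le EReal.bot_lt_zero (mul_nonneg
        (by exact_mod_cast hcoef_pos.le) (mul_nonneg ?_ ?_)))
      · exact_mod_cast inv_nonneg.mpr (by linarith : (0:ℝ) ≤ 2 * q - 1)
      · rw [ENNReal.zero_le_log_iff]; exact hB1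
  -- now everything is finite and ≥ 1
  have hAtop : A ≠ ⊤ := by
    intro h
    rw [h] at key
    have : B ^ ((1:ℝ)/2) * C ^ ((1:ℝ)/2) ≠ ⊤ := by
      apply ENNReal.mul_ne_top
      · exact ENNReal.rpow_ne_top_of_nonneg (by norm_num) hBtop
      · exact ENNReal.rpow_ne_top_of_nonneg (by norm_num) hCtop
    exact this (top_le_iff.mp key)
  have hA0 : A ≠ 0 := by intro h; rw [h] at hA1; simp at hA1
  have hB0 : B ≠ 0 := by intro h; rw [h] at hB1; simp at hB1
  have hC0 : C ≠ 0 := by intro h; rw [h] at hC1; simp at hC1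
  -- convert logs to real numbers
  have hlogA : ENNReal.log A = ((Real.log A.toReal : ℝ) : EReal) := by
    rw [ENNReal.log]; simp [hA0, hAtop]
  have hlogB : ENNReal.log B = ((Real.log B.toReal : ℝ) : EReal) := by
    rw [ENNReal.log]; simp [hB0, hBtop]
  have hlogC : ENNReal.log C = ((Real.log C.toReal : ℝ) : EReal) := by
    rw [ENNReal.log]; simp [hC0, hCtop]
  rw [hlogA, hlogB, hlogC, ← EReal.coe_mul, ← EReal.coe_mul, ← EReal.coe_mul, ← EReal.coe_mul,
    ← EReal.coe_add, EReal.coe_le_coe_iff]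
  -- real-number inequality
  set a := A.toReal
  set b := B.toReal
  set c := C.toReal
  have hb1 : 1 ≤ b := by
    rw [← ENNReal.toReal_one]
    exact ENNReal.toReal_mono hBtop hB1
  have hc1 : 1 ≤ c := by
    rw [← ENNReal.toReal_one]
    exact ENNReal.toReal_mono hCtop hC1
  have ha1 : 1 ≤ a := by
    rw [← ENNReal.toReal_one]
    exact ENNReal.toReal_mono hAtop hA1
  have hkey' : a ≤ b ^ ((1:ℝ)/2) * c ^ ((1:ℝ)/2) := by
    have h := ENNReal.toReal_mono (ENNReal.mul_ne_top
      (ENNReal.rpow_ne_top_of_nonneg (by norm_num) hBtop)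
      (ENNReal.rpow_ne_top_of_nonneg (by norm_num) hCtop)) key
    rwa [ENNReal.toReal_mul, ← ENNReal.toReal_rpow, ← ENNReal.toReal_rpow] at h
  have hloga : Real.log a ≤ (1/2) * Real.log b + (1/2) * Real.log c := by
    have hb0 : (0:ℝ) < b := by linarith
    have hc0 : (0:ℝ) < c := by linarith
    have h1 : Real.log a ≤ Real.log (b ^ ((1:ℝ)/2) * c ^ ((1:ℝ)/2)) :=
      Real.log_le_log (by linarith) hkey'
    rw [Real.log_mul (by positivity) (by positivity), Real.log_rpow hb0,
      Real.log_rpow hc0] at h1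
    linarith
  have hq1 : (0:ℝ) < q - 1 := by linarith
  have hne1 : q - 1 ≠ 0 := ne_of_gt hq1
  have hne2 : 2 * q - 1 ≠ 0 := by intro h; nlinarith
  have hne3 : 2 * q - 1 - 1 ≠ 0 := by intro h; nlinarith
  calc (q - 1)⁻¹ * Real.log a
      ≤ (q - 1)⁻¹ * ((1/2) * Real.log b + (1/2) * Real.log c) := by
        apply mul_le_mul_of_nonneg_left hloga (inv_nonneg.mpr hq1.le)
    _ = (q - 1/2) / (q - 1) * ((2 * q - 1)⁻¹ * Real.log b)
        + (2 * q - 1 - 1)⁻¹ * Real.log c := by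
        field_simp
        rw [show q * 2 - 1 - 1 = 2 * (q - 1) by ring, show q * 2 - 1 = 2 * (q - 1/2) by ring]
        field_simp
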